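/- Let X be a nonnegative integrable random variable on a probability space (Ω, ℱ, ℙ) and fix c ∈ (0,1). Let τ_c = inf{ v ∈ ℝ : ℙ(X < v) ≥ c }, let κ = 0 if ℙ(X = τ_c) = 0 and κ = (c − ℙ(X < τ_c)) / ℙ(X = τ_c) otherwise, and set a* = 1{X < τ_c} + κ·1{X = τ_c}. Then for every measurable function a : Ω → [0,1] with 𝔼[a] = c, one has 𝔼[X·a*] ≤ 𝔼[X·a]. (Neyman–Pearson-type step: among all randomized acceptance rules with coverage exactly c, the randomized threshold rule on X minimizes the accepted expected loss.) -/

import Mathlib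

open MeasureTheory

/-- **Neyman–Pearson-type step.** Let `X` be a nonnegative integrable random variable on a
probability space `(Ω, ℱ, ℙ)` and `c ∈ (0,1)`. With `τ_c = inf {v : ℙ(X < v) ≥ c}`,
tie-breaking probability `κ` (equal to `0` if `ℙ(X = τ_c) = 0` and to
`(c - ℙ(X < τ_c)) / ℙ(X = τ_c)` otherwise), and randomized threshold rule
`a* = 1{X < τ_c} + κ·1{X = τ_c}`, we have: for every measurable `a : Ω → [0,1]` with
`𝔼[a] = c`, `𝔼[X·a*] ≤ 𝔼[X·a]`. That is, among all randomized acceptance rules with coverage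
exactly `c`, the randomized threshold rule on `X` minimizes the accepted expected loss. -/
theorem randomized_threshold_minimizes_accepted_loss
    {Ω : Type*} [MeasurableSpace Ω] (μ : Measure Ω) [IsProbabilityMeasure μ]
    (X : Ω → ℝ) (hX : Measurable X) (hX0 : ∀ ω, 0 ≤ X ω) (hXint : Integrable X μ)
    (c : ℝ) (hc0 : 0 < c) (hc1 : c < 1)
    (τ κ : ℝ)
    (hτ : τ = sInf {v : ℝ | c ≤ (μ {ω | X ω < v}).toReal})
    (hκ : κ = if (μ {ω | X ω = τ}).toReal = 0 then 0
          else (c - (μ {ω | X ω < τ}).toReal) / (μ {ω | X ω = τ}).toReal)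
    (astar : Ω → ℝ)
    (hastar : astar = fun ω =>
      (if X ω < τ then (1 : ℝ) else 0) + κ * (if X ω = τ then (1 : ℝ) else 0)) :
    ∀ a : Ω → ℝ, Measurable a → (∀ ω, a ω ∈ Set.Icc (0 : ℝ) 1) →
      (∫ ω, a ω ∂μ) = c →
      ∫ ω, X ω * astar ω ∂μ ≤ ∫ ω, X ω * a ω ∂μ := by
  intro a ha hab hac
  -- measurable sets
  have hSlt : ∀ v : ℝ, MeasurableSet {ω | X ω < v} := fun v => hX measurableSet_Iio
  have hSeq : MeasurableSet {ω | X ω = τ} := hX (measurableSet_singleton τ)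
  set F : ℝ → ℝ := fun v => (μ {ω | X ω < v}).toReal with hFdef
  set S : Set ℝ := {v : ℝ | c ≤ F v} with hSdef
  have hFmono : Monotone F := by
    intro u v huv
    exact ENNReal.toReal_mono (measure_ne_top μ _)
      (measure_mono fun ω hω => lt_of_lt_of_le hω huv)
  -- S is nonempty
  have hS_ne : S.Nonempty := by
    have hU : (⋃ n : ℕ, {ω | X ω < (n : ℝ)}) = Set.univ := by
      ext ω
      simp only [Set.mem_iUnion, Set.mem_setOf_eq, Set.mem_univ, iff_true]
      obtain ⟨n, hn⟩ := exists_nat_gt (X ω)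
      exact ⟨n, hn⟩
    have hmono : Monotone fun n : ℕ => {ω | X ω < (n : ℝ)} := by
      intro m n hmn ω hω
      simp only [Set.mem_setOf_eq] at hω ⊢
      exact lt_of_lt_of_le hω (by exact_mod_cast hmn)
    have h1 : Filter.Tendsto (fun n : ℕ => μ {ω | X ω < (n : ℝ)}) Filter.atTop
        (nhds (μ Set.univ)) := by
      have := tendsto_measure_iUnion_atTop (μ := μ) hmono
      rwa [hU] at this
    rw [measure_univ] at h1
    have h2 : Filter.Tendsto (fun n : ℕ => F (n : ℝ)) Filter.atTop (nhds 1) := by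
      have := (ENNReal.tendsto_toReal (by norm_num : (1 : ENNReal) ≠ ⊤)).comp h1
      rw [ENNReal.toReal_one] at this; exact this
    have h3 : ∀ᶠ n : ℕ in Filter.atTop, c ≤ F (n : ℝ) :=
      h2.eventually_const_le hc1
    obtain ⟨n, hn⟩ := h3.exists
    exact ⟨(n : ℝ), hn⟩
  -- S is bounded below by 0
  have hS_bdd : BddBelow S := by
    refine ⟨0, fun v hv => ?_⟩
    by_contra hv0
    push_neg at hv0
    have : {ω | X ω < v} = ∅ := by
      ext ω
      simp only [Set.mem_setOf_eq, Set.mem_empty_iff_false, iff_false, not_lt]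
      exact le_trans hv0.le (hX0 ω)
    have : F v = 0 := by simp [hFdef, this]
    rw [hSdef] at hv
    simp only [Set.mem_setOf_eq] at hv
    linarith
  -- F τ ≤ c
  have hFτ_le : F τ ≤ c := by
    have hU : (⋃ n : ℕ, {ω | X ω < τ - 1 / (n + 1)}) = {ω | X ω < τ} := by
      ext ω
      simp only [Set.mem_iUnion, Set.mem_setOf_eq]
      constructor
      · rintro ⟨n, hn⟩
        have : (0 : ℝ) < 1 / (n + 1) := by positivity
        linarith
      · intro h
        obtain ⟨n, hn⟩ := exists_nat_one_div_lt (by linarith : (0:ℝ) < τ - X ω)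
        exact ⟨n, by linarith⟩
    have hmono : Monotone fun n : ℕ => {ω | X ω < τ - 1 / (n + 1)} := by
      intro m n hmn ω hω
      simp only [Set.mem_setOf_eq] at hω ⊢
      have h1 : (1 : ℝ) / (n + 1) ≤ 1 / (m + 1) := by
        apply one_div_le_one_div_of_le
        · positivity
        · exact_mod_cast by exact_mod_cast add_le_add_left (Nat.cast_le.mpr hmn) 1
      linarith
    have h1 : Filter.Tendsto (fun n : ℕ => μ {ω | X ω < τ - 1 / (n + 1)}) Filter.atTop
        (nhds (μ {ω | X ω < τ})) := by
      have := tendsto_measure_iUnion_atTop (μ := μ) hmono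
      rwa [hU] at this
    have h2 : Filter.Tendsto (fun n : ℕ => F (τ - 1 / (n + 1))) Filter.atTop
        (nhds (F τ)) :=
      (ENNReal.tendsto_toReal (measure_ne_top μ _)).comp h1
    refine le_of_tendsto h2 (Filter.Eventually.of_forall fun n => ?_)
    have hnot : τ - 1 / (n + 1 : ℝ) ∉ S := by
      intro hmem
      have := csInf_le hS_bdd hmem
      rw [← hτ] at this
      have : (0 : ℝ) < 1 / (n + 1) := by positivity
      linarith [csInf_le hS_bdd hmem, hτ ▸ (csInf_le hS_bdd hmem)]
    rw [hSdef] at hnot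
    simp only [Set.mem_setOf_eq, not_le] at hnot
    exact hnot.le
  -- c ≤ F τ + μ{X = τ}
  have hsplit : (μ {ω | X ω ≤ τ}).toReal = F τ + (μ {ω | X ω = τ}).toReal := by
    have hu : {ω | X ω ≤ τ} = {ω | X ω < τ} ∪ {ω | X ω = τ} := by
      ext ω; simp [le_iff_lt_or_eq]
    have hd : Disjoint {ω | X ω < τ} {ω | X ω = τ} := by
      rw [Set.disjoint_left]
      intro ω h1 h2
      simp only [Set.mem_setOf_eq] at *
      exact absurd h2 (ne_of_lt h1)
    rw [hu, measure_union hd hSeq, ENNReal.toReal_add (measure_ne_top μ _) (measure_ne_top μ _)]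
  have h_le : c ≤ F τ + (μ {ω | X ω = τ}).toReal := by
    rw [← hsplit]
    have hI : (⋂ n : ℕ, {ω | X ω < τ + 1 / (n + 1)}) = {ω | X ω ≤ τ} := by
      ext ω
      simp only [Set.mem_iInter, Set.mem_setOf_eq]
      constructor
      · intro h
        by_contra hlt
        push_neg at hlt
        obtain ⟨n, hn⟩ := exists_nat_one_div_lt (by linarith : (0:ℝ) < X ω - τ)
        have := h n
        linarith
      · intro h n
        have : (0 : ℝ) < 1 / (n + 1) := by positivity
        linarith
    have hanti : Antitone fun n : ℕ => {ω | X ω < τ + 1 / (n + 1)} := by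
      intro m n hmn ω hω
      simp only [Set.mem_setOf_eq] at hω ⊢
      have h1 : (1 : ℝ) / (n + 1) ≤ 1 / (m + 1) := by
        apply one_div_le_one_div_of_le
        · positivity
        · exact_mod_cast by exact_mod_cast add_le_add_left (Nat.cast_le.mpr hmn) 1
      linarith
    have h1 : Filter.Tendsto (fun n : ℕ => μ {ω | X ω < τ + 1 / (n + 1)}) Filter.atTop
        (nhds (μ {ω | X ω ≤ τ})) := by
      have := tendsto_measure_iInter_atTop (μ := μ)
        (fun n => (hSlt _).nullMeasurableSet) hanti ⟨0, measure_ne_top μ _⟩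
      rwa [hI] at this
    have h2 : Filter.Tendsto (fun n : ℕ => F (τ + 1 / (n + 1))) Filter.atTop
        (nhds ((μ {ω | X ω ≤ τ}).toReal)) :=
      (ENNReal.tendsto_toReal (measure_ne_top μ _)).comp h1
    refine ge_of_tendsto h2 (Filter.Eventually.of_forall fun n => ?_)
    have hlt : sInf S < τ + 1 / (n + 1 : ℝ) := by
      rw [← hτ]
      have : (0 : ℝ) < 1 / (n + 1) := by positivity
      linarith
    obtain ⟨s, hsS, hs⟩ := exists_lt_of_csInf_lt hS_ne hlt
    rw [hSdef] at hsS
    simp only [Set.mem_setOf_eq] at hsS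
    exact le_trans hsS (hFmono hs.le)
  -- the tie-breaking identity
  have hκ0 : F τ + κ * (μ {ω | X ω = τ}).toReal = c := by
    by_cases hp : (μ {ω | X ω = τ}).toReal = 0
    · rw [hκ, if_pos hp]
      rw [hp] at h_le
      simp only [zero_mul, add_zero]
      linarith
    · rw [hκ, if_neg hp, div_mul_cancel₀ _ hp]
      ring
  -- integrability and integral of astar
  have e1 : (fun ω => if X ω < τ then (1:ℝ) else 0)
      = Set.indicator {ω | X ω < τ} (fun _ => (1:ℝ)) := by
    funext ω; simp [Set.indicator_apply, Set.mem_setOf_eq]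
  have e2 : (fun ω => if X ω = τ then (1:ℝ) else 0)
      = Set.indicator {ω | X ω = τ} (fun _ => (1:ℝ)) := by
    funext ω; simp [Set.indicator_apply, Set.mem_setOf_eq]
  have i1 : Integrable (fun ω => if X ω < τ then (1:ℝ) else 0) μ := by
    rw [e1]; exact (integrable_const (1:ℝ)).indicator (hSlt τ)
  have i2 : Integrable (fun ω => if X ω = τ then (1:ℝ) else 0) μ := by
    rw [e2]; exact (integrable_const (1:ℝ)).indicator hSeq
  have hastar_int : Integrable astar μ := by
    rw [hastar]; exact i1.add (i2.const_mul κ)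
  have hastar_meas : Measurable astar := by
    rw [hastar]
    exact (Measurable.ite (hSlt τ) measurable_const measurable_const).add
      (measurable_const.mul (Measurable.ite (by exact hSeq) measurable_const measurable_const))
  have hcov : ∫ ω, astar ω ∂μ = c := by
    rw [hastar]
    rw [integral_add i1 (i2.const_mul κ), integral_const_mul, e1, e2,
      integral_indicator_const (1:ℝ) (hSlt τ), integral_indicator_const (1:ℝ) hSeq]
    simpa [measureReal_def, hFdef] using hκ0
  -- bounds on astar
  have hastar_bd : ∀ ω, |astar ω| ≤ 1 + |κ| := by
    intro ω
    rw [hastar]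
    have h1 : |if X ω < τ then (1:ℝ) else 0| ≤ 1 := by split <;> simp
    have h2 : |if X ω = τ then (1:ℝ) else 0| ≤ 1 := by split <;> simp
    calc |(if X ω < τ then (1:ℝ) else 0) + κ * (if X ω = τ then (1:ℝ) else 0)|
        ≤ |if X ω < τ then (1:ℝ) else 0| + |κ * (if X ω = τ then (1:ℝ) else 0)| := abs_add_le _ _
      _ ≤ 1 + |κ| * 1 := by
          rw [abs_mul]
          exact add_le_add h1 (mul_le_mul_of_nonneg_left h2 (abs_nonneg κ))
      _ = 1 + |κ| := by ring
  -- integrability of the products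
  have ha_int : Integrable a μ := by
    refine Integrable.mono' (integrable_const (1:ℝ)) ha.aestronglyMeasurable
      (Filter.Eventually.of_forall fun ω => ?_)
    have := hab ω
    rw [Real.norm_eq_abs, abs_le]
    exact ⟨by linarith [this.1], this.2⟩
  have hXa_int : Integrable (fun ω => X ω * a ω) μ := by
    refine Integrable.mono' hXint.abs ((hX.mul ha).aestronglyMeasurable)
      (Filter.Eventually.of_forall fun ω => ?_)
    rw [Real.norm_eq_abs, abs_mul]
    have := hab ω
    calc |X ω| * |a ω| ≤ |X ω| * 1 := by
          apply mul_le_mul_of_nonneg_left _ (abs_nonneg _)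
          rw [abs_le]; exact ⟨by linarith [this.1], this.2⟩
      _ = |X ω| := mul_one _
  have hXastar_int : Integrable (fun ω => X ω * astar ω) μ := by
    refine Integrable.mono' ((hXint.abs).const_mul (1 + |κ|))
      ((hX.mul hastar_meas).aestronglyMeasurable)
      (Filter.Eventually.of_forall fun ω => ?_)
    rw [Real.norm_eq_abs, abs_mul, mul_comm (1 + |κ|) |X ω|]
    exact mul_le_mul_of_nonneg_left (hastar_bd ω) (abs_nonneg _)
  -- pointwise key inequality
  have key : ∀ ω, 0 ≤ (X ω - τ) * (a ω - astar ω) := by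
    intro ω
    rcases lt_trichotomy (X ω) τ with h | h | h
    · have hne : X ω ≠ τ := ne_of_lt h
      have : astar ω = 1 := by simp [hastar, h, hne]
      rw [this]
      have := (hab ω).2
      nlinarith
    · rw [h]; simp
    · have hne : X ω ≠ τ := ne_of_gt h
      have hnl : ¬ X ω < τ := not_lt.mpr h.le
      have : astar ω = 0 := by simp [hastar, hnl, hne]
      rw [this]
      have := (hab ω).1
      nlinarith
  have h0 : 0 ≤ ∫ ω, (X ω - τ) * (a ω - astar ω) ∂μ :=
    integral_nonneg key
  have hrw : (fun ω => (X ω - τ) * (a ω - astar ω))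
      = fun ω => (X ω * a ω - X ω * astar ω) - (τ * a ω - τ * astar ω) := by
    funext ω; ring
  have hf1 : Integrable (fun ω => X ω * a ω - X ω * astar ω) μ := hXa_int.sub hXastar_int
  have hf2 : Integrable (fun ω => τ * a ω - τ * astar ω) μ :=
    (ha_int.const_mul τ).sub (hastar_int.const_mul τ)
  rw [hrw, integral_sub hf1 hf2,
    integral_sub hXa_int hXastar_int,
    integral_sub (ha_int.const_mul τ) (hastar_int.const_mul τ),
    integral_const_mul, integral_const_mul, hac, hcov] at h0
  linarith
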